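/- arXiv:2403.18429 — 8 statements merged into one kernel-verified Lean document; each statement's English description precedes it below -/
import Mathlib

section
/- There exists a finite simple connected graph G with at least two vertices such that μ(G) > max over all vertices v of G of (2·m_v²)/d_v. (This disproves conjectured vertex-maximum bound 2 of Brankov, Hansen and Stevanović.) -/
noncomputable section

open Finset

/-- The degree of a vertex, as a real number. -/
def degR {V : Type*} [Fintype V] (G : SimpleGraph V) (v : V) : ℝ :=
  letI := Classical.decRel G.Adj
  (G.degree v : ℝ)

/-- The average degree of the neighbours of a vertex, as a real number:
`m_v = (∑_{u ~ v} d_u) / d_v`. -/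
def avgDegR {V : Type*} [Fintype V] (G : SimpleGraph V) (v : V) : ℝ :=
  letI := Classical.decRel G.Adj
  (∑ u ∈ G.neighborFinset v, (G.degree u : ℝ)) / (G.degree v : ℝ)

/-- The largest eigenvalue of the Laplacian matrix `L = D - A` of a finite graph. -/
def lapSpecRad {V : Type*} [Fintype V] [DecidableEq V] [Nonempty V]
    (G : SimpleGraph V) : ℝ :=
  letI := Classical.decRel G.Adj
  ⨆ i, (SimpleGraph.posSemidef_lapMatrix ℝ G).isHermitian.eigenvalues i

/- ### Auxiliary material for the counterexample -/

open Matrix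

abbrev V26 := Option (ZMod 25)

def S25 : Finset (ZMod 25) := {1,2,3,4,21,22,23,24}

def adjB : V26 → V26 → Bool
  | none, none => false
  | none, some _ => true
  | some _, none => true
  | some i, some j => decide (i - j ∈ S25)

def G26 : SimpleGraph V26 where
  Adj u v := adjB u v
  symm := ⟨fun u v h => by
    have : ∀ a b : V26, adjB a b = true → adjB b a = true := by decide
    exact this u v h⟩
  loopless := ⟨fun v h => by
    have : ∀ a : V26, adjB a a = true → False := by decide
    exact this v h⟩

instance decAdj26 : DecidableRel G26.Adj := fun u v =>
  inferInstanceAs (Decidable (adjB u v = true))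

lemma deg26 : ∀ v : V26, G26.degree v = if v = none then 25 else 9 := by decide

lemma mem_nf26 : ∀ v : V26, (none ∈ G26.neighborFinset v) ↔ (v ≠ none) := by decide

lemma degcast26 (u : V26) (i : Fintype (G26.neighborSet u)) :
    ((@SimpleGraph.degree _ G26 u i : ℕ) : ℝ) = if u = none then 25 else 9 := by
  obtain rfl : i = SimpleGraph.neighborSetFintype G26 u := Subsingleton.elim _ _
  rw [deg26 u]
  split <;> norm_num

lemma degR26 (v : V26) : degR G26 v = if v = none then 25 else 9 := by
  simp only [degR]
  exact degcast26 v _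

lemma sum_nf26 (v : V26) (i : Fintype (G26.neighborSet v)) (f : V26 → ℝ) (a b : ℝ)
    (hf : ∀ u, f u = if u = none then a else b) :
    ∑ u ∈ @SimpleGraph.neighborFinset _ G26 v i, f u =
      b * (if v = none then 25 else 9) + (if v = none then 0 else a - b) := by
  obtain rfl : i = SimpleGraph.neighborSetFintype G26 v := Subsingleton.elim _ _
  have h1 : ∀ u ∈ G26.neighborFinset v, f u = b + (if u = none then a - b else 0) := by
    intro u _
    rw [hf u]; split <;> ring
  rw [Finset.sum_congr rfl h1, Finset.sum_add_distrib, Finset.sum_const,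
    Finset.sum_ite_eq' (G26.neighborFinset v) none fun _ => a - b]
  have hc : (G26.neighborFinset v).card = if v = none then 25 else 9 := deg26 v
  by_cases h : v = none
  · subst h
    have hno : (none : V26) ∉ G26.neighborFinset (none : V26) := by
      rw [mem_nf26]; simp
    rw [if_neg hno, hc]
    simp only [if_pos rfl]
    push_cast
    ring
  · have hmm : none ∈ G26.neighborFinset v := (mem_nf26 v).mpr h
    rw [if_pos hmm, hc]
    simp only [if_neg h]
    push_cast
    ring

lemma sumdeg26 (v : V26) (i : Fintype (G26.neighborSet v))
    (I : ∀ u : V26, Fintype (G26.neighborSet u)) :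
    ∑ u ∈ @SimpleGraph.neighborFinset _ G26 v i, ((@SimpleGraph.degree _ G26 u (I u) : ℕ) : ℝ) =
      9 * (if v = none then 25 else 9) + (if v = none then 0 else 25 - 9) :=
  sum_nf26 v i _ 25 9 (fun u => degcast26 u (I u))

lemma avgDegR26 (v : V26) : avgDegR G26 v = if v = none then 9 else 97 / 9 := by
  simp only [avgDegR]
  rw [sumdeg26 v (@SimpleGraph.neighborSetFintype V26 G26 _ (Classical.decRel G26.Adj) v)
      (fun u => @SimpleGraph.neighborSetFintype V26 G26 _ (Classical.decRel G26.Adj) u),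
    degcast26 v _]
  by_cases h : v = none <;> simp [h] <;> norm_num

theorem mem_spectrum_of_mulVec' {n : Type*} [Fintype n] [DecidableEq n]
    (A : Matrix n n ℝ) (x : n → ℝ) (hx : x ≠ 0) (c : ℝ)
    (h : A *ᵥ x = c • x) : c ∈ spectrum ℝ A := by
  rw [spectrum.mem_iff]
  intro hu
  rw [Matrix.isUnit_iff_isUnit_det] at hu
  have h0 : (algebraMap ℝ (Matrix n n ℝ) c - A) *ᵥ x = 0 := by
    rw [Matrix.sub_mulVec, h]
    funext i
    simp [Matrix.algebraMap_eq_diagonal, Matrix.mulVec_diagonal]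
  have hdet : (algebraMap ℝ (Matrix n n ℝ) c - A).det = 0 :=
    (Matrix.exists_mulVec_eq_zero_iff).mp ⟨x, hx, h0⟩
  rw [hdet] at hu
  exact hu.ne_zero rfl

def xv : V26 → ℝ := fun v => if v = none then 25 else -1

lemma lap26 (inst : DecidableRel G26.Adj) :
    (letI := inst; SimpleGraph.lapMatrix ℝ G26) *ᵥ xv = (26 : ℝ) • xv := by
  obtain rfl : inst = decAdj26 := Subsingleton.elim _ _
  funext v
  rw [SimpleGraph.lapMatrix_mulVec_apply]
  rw [sum_nf26 v _ xv 25 (-1) (fun u => rfl)]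
  rw [degcast26 v _]
  by_cases h : v = none <;> simp [xv, h] <;> norm_num

lemma spec_ge26 (inst : DecidableRel G26.Adj) :
    (26 : ℝ) ≤ ⨆ i : V26, (letI := inst;
      (SimpleGraph.posSemidef_lapMatrix ℝ G26).isHermitian.eigenvalues i) := by
  letI := inst
  have hx : xv ≠ 0 := by
    intro h
    have : xv none = 0 := by rw [h]; rfl
    simp [xv] at this
  have hmem : (26 : ℝ) ∈ spectrum ℝ (SimpleGraph.lapMatrix ℝ G26) :=
    mem_spectrum_of_mulVec' _ xv hx 26 (lap26 inst)
  rw [Matrix.IsHermitian.spectrum_real_eq_range_eigenvalues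
    (SimpleGraph.posSemidef_lapMatrix ℝ G26).isHermitian] at hmem
  obtain ⟨i, hi⟩ := hmem
  have hs := le_ciSup
    (f := (SimpleGraph.posSemidef_lapMatrix ℝ G26).isHermitian.eigenvalues)
    (Set.Finite.bddAbove (Set.finite_range _)) i
  rw [hi] at hs
  exact hs

/-- There exists a finite simple connected graph `G` with at least two vertices whose
Laplacian spectral radius exceeds the conjectured vertex-maximum bound. -/
theorem exists_counterexample_bound2 :
    ∃ (V : Type) (_ : Fintype V) (_ : DecidableEq V) (_ : Nonempty V)
      (G : SimpleGraph V), G.Connected ∧ 2 ≤ Fintype.card V ∧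
      ∀ v : V, (fun d m => 2 * m ^ 2 / d) (degR G v) (avgDegR G v) < lapSpecRad G := by
  refine ⟨V26, inferInstance, inferInstance, inferInstance, G26, ?_, ?_, ?_⟩
  · have hr : ∀ v : V26, G26.Reachable v none := by
      intro v
      cases v with
      | none => exact SimpleGraph.Reachable.refl none
      | some i => exact SimpleGraph.Adj.reachable (by show adjB _ _ = true; rfl)
    exact ⟨fun u v => (hr u).trans (hr v).symm⟩
  · simp [Fintype.card_option]
  · intro v
    have hle : (26 : ℝ) ≤ lapSpecRad G26 := by
      simp only [lapSpecRad]
      exact spec_ge26 _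
    simp only
    rw [degR26 v, avgDegR26 v]
    by_cases h : v = none
    · simp only [h, if_pos]
      calc 2 * (9:ℝ)^2 / 25 < 26 := by norm_num
        _ ≤ _ := hle
    · rw [if_neg h, if_neg h]
      calc 2 * ((97:ℝ)/9)^2 / 9 < 26 := by norm_num
        _ ≤ _ := hle
end
end

section
/- There exists a finite simple connected graph G with at least two vertices such that μ(G) > max over all vertices v of G of (m_v²/d_v + m_v). (This disproves conjectured vertex-maximum bound 3 of Brankov, Hansen and Stevanović.) -/
noncomputable section

open Finset

/-! ### Auxiliary material for the counterexample -/

open Matrix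

/-- Adjacency of the counterexample: vertex 0 (a hub) joined to four disjoint copies of `K₅`
on the vertices `1,…,20`. -/
def cexAdj (i j : Fin 21) : Prop :=
  i ≠ j ∧ (i = 0 ∨ j = 0 ∨ ((i : ℕ) - 1) / 5 = ((j : ℕ) - 1) / 5)

instance : DecidableRel cexAdj := fun i j => by unfold cexAdj; infer_instance

/-- The counterexample graph. -/
def cexG : SimpleGraph (Fin 21) where
  Adj := cexAdj
  symm := by
    constructor
    intro i j ⟨h1, h2⟩
    exact ⟨h1.symm, by tauto⟩
  loopless := by constructor; intro i ⟨h1, _⟩; exact h1 rfl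

instance cexDecAdj : DecidableRel cexG.Adj := fun i j => by
  show Decidable (cexAdj i j); infer_instance

lemma cex_deg : ∀ v : Fin 21, cexG.degree v = if v = 0 then 20 else 5 := by decide

lemma cex_sum : ∀ v : Fin 21,
    (∑ u ∈ cexG.neighborFinset v, cexG.degree u) = if v = 0 then 100 else 40 := by decide

/-- Integer version of the Laplacian matrix of `cexG`. -/
def Lint : Fin 21 → Fin 21 → ℤ := fun i j =>
  (if i = j then (if i = 0 then 20 else 5) else 0) - (if cexAdj i j then 1 else 0)

/-- Integer eigenvector for eigenvalue 21. -/
def xint : Fin 21 → ℤ := fun i => if i = 0 then 20 else -1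

lemma eig_int : ∀ i : Fin 21, (∑ j, Lint i j * xint j) = 21 * xint i := by decide

/-- A matrix eigenvalue is at most the supremum of the eigenvalues of a Hermitian matrix. -/
lemma mu_le_iSup {n : Type*} [Fintype n] [DecidableEq n] [Nonempty n]
    {A : Matrix n n ℝ} (hA : A.IsHermitian) {x : n → ℝ} (hx : x ≠ 0) {μ : ℝ}
    (h : A *ᵥ x = μ • x) : μ ≤ ⨆ i, hA.eigenvalues i := by
  have hmem : μ ∈ spectrum ℝ A := by
    rw [← AlgEquiv.spectrum_eq (Matrix.toLinAlgEquiv' (R := ℝ) (n := n)) A]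
    have : Module.End.HasEigenvalue (Matrix.toLinAlgEquiv' A) μ := by
      apply Module.End.hasEigenvalue_of_hasEigenvector (x := x)
      exact ⟨Module.End.mem_eigenspace_iff.mpr (by rw [Matrix.toLinAlgEquiv'_apply]; exact h), hx⟩
    exact this.mem_spectrum
  rw [hA.spectrum_real_eq_range_eigenvalues] at hmem
  obtain ⟨i, hi⟩ := hmem
  rw [← hi]
  exact le_ciSup (Set.Finite.bddAbove (Set.finite_range _)) i

/-- Instance-independence of `degree`. -/
lemma degree_indep {V : Type*} (G : SimpleGraph V) (v : V)
    (i1 i2 : Fintype (G.neighborSet v)) :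
    @SimpleGraph.degree V G v i1 = @SimpleGraph.degree V G v i2 := by
  cases Subsingleton.elim i1 i2
  rfl

/-- Instance-independence of `neighborFinset`. -/
lemma neighborFinset_indep {V : Type*} (G : SimpleGraph V) (v : V)
    (i1 i2 : Fintype (G.neighborSet v)) :
    @SimpleGraph.neighborFinset V G v i1 = @SimpleGraph.neighborFinset V G v i2 := by
  cases Subsingleton.elim i1 i2
  rfl

/-- The Laplacian of the counterexample graph is the cast of `Lint`. -/
lemma lap_eq (inst : DecidableRel cexG.Adj) :
    @SimpleGraph.lapMatrix (Fin 21) ℝ _ cexG inst _ _ = fun i j => ((Lint i j : ℤ) : ℝ) := by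
  cases Subsingleton.elim inst cexDecAdj
  funext i j
  simp only [SimpleGraph.lapMatrix, SimpleGraph.degMatrix, SimpleGraph.adjMatrix,
    Matrix.sub_apply, Matrix.diagonal_apply, Matrix.of_apply, Lint, cex_deg i]
  have hadj : cexG.Adj i j ↔ cexAdj i j := Iff.rfl
  push_cast [apply_ite (fun n : ℕ => (n : ℝ)), apply_ite (fun n : ℤ => (n : ℝ)), hadj]
  split_ifs <;> norm_num

/-- There exists a finite simple connected graph `G` with at least two vertices whose
Laplacian spectral radius exceeds the conjectured vertex-maximum bound. -/
theorem exists_counterexample_bound3 :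
    ∃ (V : Type) (_ : Fintype V) (_ : DecidableEq V) (_ : Nonempty V)
      (G : SimpleGraph V), G.Connected ∧ 2 ≤ Fintype.card V ∧
      ∀ v : V, (fun d m => m ^ 2 / d + m) (degR G v) (avgDegR G v) < lapSpecRad G := by
  refine ⟨Fin 21, inferInstance, inferInstance, inferInstance, cexG, ?_, ?_, ?_⟩
  · -- connectivity
    rw [SimpleGraph.connected_iff]
    refine ⟨?_, inferInstance⟩
    have hub : ∀ v : Fin 21, v ≠ 0 → cexG.Adj 0 v := fun v hv => ⟨Ne.symm hv, Or.inl rfl⟩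
    intro u v
    by_cases hu : u = 0
    · subst hu
      by_cases hv : v = 0
      · subst hv; rfl
      · exact (hub v hv).reachable
    · by_cases hv : v = 0
      · subst hv; exact ((hub u hu).reachable).symm
      · exact ((hub u hu).reachable).symm.trans (hub v hv).reachable
  · simp
  · intro v
    -- the spectral radius is at least 21
    have hinst : Classical.decRel cexG.Adj = cexDecAdj := Subsingleton.elim _ _
    have hmu : (21 : ℝ) ≤ lapSpecRad cexG := by
      unfold lapSpecRad
      apply mu_le_iSup _ (x := fun i => ((xint i : ℤ) : ℝ))
      · intro h
        have := congrFun h 1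
        simp [xint] at this
      · rw [lap_eq]
        funext i
        show (∑ j, ((Lint i j : ℤ) : ℝ) * ((xint j : ℤ) : ℝ)) = 21 * ((xint i : ℤ) : ℝ)
        have h1 : (∑ j, ((Lint i j : ℤ) : ℝ) * ((xint j : ℤ) : ℝ))
            = ((∑ j, Lint i j * xint j : ℤ) : ℝ) := by push_cast; rfl
        rw [h1, eig_int i]
        push_cast
        ring
    -- the bound at each vertex
    have hd := cex_deg v
    have hs := cex_sum v
    have hdr : degR cexG v = if v = 0 then (20 : ℝ) else 5 := by
      unfold degR
      rw [hinst, hd]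
      push_cast [apply_ite (fun n : ℕ => (n : ℝ))]
      rfl
    have har : avgDegR cexG v = if v = 0 then (5 : ℝ) else 8 := by
      unfold avgDegR
      rw [hinst, ← Nat.cast_sum, hs, hd]
      split_ifs <;> norm_num
    refine lt_of_lt_of_le ?_ hmu
    simp only [hdr, har]
    split_ifs <;> norm_num
end
end

section
/- There exists a finite simple connected graph G with at least two vertices such that μ(G) > max over all vertices v of G of the fourth root of (5·d_v⁴ + 11·m_v⁴). (This disproves conjectured vertex-maximum bound 17 of Brankov, Hansen and Stevanović.) -/
noncomputable section

open Finset Matrix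

namespace CE17

open scoped RealInnerProductSpace

/-- Adjacency data of the counterexample graph on 12 vertices. -/
def adjB : Fin 12 → Fin 12 → Bool :=
  ![![false,true ,false,false,false,true ,false,true ,false,true ,true ,false],
    ![true ,false,true ,true ,true ,false,true ,false,false,false,false,false],
    ![false,true ,false,false,false,false,false,true ,true ,true ,true ,false],
    ![false,true ,false,false,false,false,false,true ,false,false,false,false],
    ![false,true ,false,false,false,false,false,true ,true ,true ,true ,false],
    ![true ,false,false,false,false,false,true ,false,false,false,false,false],
    ![false,true ,false,false,false,true ,false,true ,false,true ,true ,false],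
    ![true ,false,true ,true ,true ,false,true ,false,false,false,false,false],
    ![false,false,true ,false,true ,false,false,false,false,false,false,false],
    ![true ,false,true ,false,true ,false,true ,false,false,false,false,true ],
    ![true ,false,true ,false,true ,false,true ,false,false,false,false,true ],
    ![false,false,false,false,false,false,false,false,false,true ,true ,false]]

/-- The counterexample graph. -/
def G : SimpleGraph (Fin 12) where
  Adj i j := adjB i j = true
  symm := by
    have h : ∀ i j : Fin 12, adjB i j = true → adjB j i = true := by decide
    exact ⟨fun i j hij => h i j hij⟩
  loopless := by
    have h : ∀ i : Fin 12, ¬ adjB i i = true := by decide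
    exact ⟨fun i hi => h i hi⟩

instance : DecidableRel G.Adj := fun i j =>
  inferInstanceAs (Decidable (adjB i j = true))

lemma degree_congr {V : Type*} (G : SimpleGraph V) (v : V)
    (h1 h2 : Fintype (G.neighborSet v)) :
    @SimpleGraph.degree V G v h1 = @SimpleGraph.degree V G v h2 := by
  rw [Subsingleton.elim h1 h2]

lemma neighborFinset_congr {V : Type*} (G : SimpleGraph V) (v : V)
    (h1 h2 : Fintype (G.neighborSet v)) :
    @SimpleGraph.neighborFinset V G v h1 = @SimpleGraph.neighborFinset V G v h2 := by
  rw [Subsingleton.elim h1 h2]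

/-- Rayleigh quotient bound: for a real Hermitian matrix, the quadratic form is at most the
largest eigenvalue times the squared norm. -/
lemma rayleigh_le {n : Type*} [Fintype n] [DecidableEq n] [Nonempty n]
    {A : Matrix n n ℝ} (hA : A.IsHermitian) (x : EuclideanSpace ℝ n) :
    dotProduct x (A.mulVec x) ≤ (⨆ i, hA.eigenvalues i) * dotProduct x x := by
  classical
  have hsym : Aᵀ = A := by
    have h := hA
    rwa [Matrix.IsHermitian, Matrix.conjTranspose_eq_transpose_of_trivial] at h
  have hdot : ∀ u v : EuclideanSpace ℝ n, ⟪u, v⟫ = dotProduct u v := by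
    intro u v
    simp [PiLp.inner_apply, RCLike.inner_apply, dotProduct, mul_comm]
  set M := ⨆ i, hA.eigenvalues i with hM
  have hle : ∀ i, hA.eigenvalues i ≤ M := fun i =>
    le_ciSup (Set.Finite.bddAbove (Set.finite_range _)) i
  set b := hA.eigenvectorBasis with hb
  have h2 : ∀ i, ⟪(b i : EuclideanSpace ℝ n), (WithLp.toLp 2 (A.mulVec x) : EuclideanSpace ℝ n)⟫
      = hA.eigenvalues i * ⟪x, (b i : EuclideanSpace ℝ n)⟫ := by
    intro i
    rw [hdot, hdot, WithLp.ofLp_toLp]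
    rw [Matrix.dotProduct_mulVec, ← Matrix.mulVec_transpose, hsym]
    have hmul' : A.mulVec (hA.eigenvectorBasis i)
        = hA.eigenvalues i • ⇑(hA.eigenvectorBasis i) :=
      hA.mulVec_eigenvectorBasis i
    rw [hmul', smul_dotProduct, dotProduct_comm (hA.eigenvectorBasis i) x]
    simp [hb]
  have hx1 : dotProduct x (A.mulVec x)
      = ∑ i, hA.eigenvalues i * (⟪x, (b i : EuclideanSpace ℝ n)⟫
          * ⟪x, (b i : EuclideanSpace ℝ n)⟫) := by
    rw [show dotProduct (x : n → ℝ) (A.mulVec x) = ⟪x, WithLp.toLp 2 (A.mulVec x)⟫ from (hdot x (WithLp.toLp 2 (A.mulVec x))).symm,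
      ← b.sum_inner_mul_inner x (WithLp.toLp 2 (A.mulVec x))]
    refine Finset.sum_congr rfl fun i _ => ?_
    rw [h2 i]; ring
  have hx2 : dotProduct x x
      = ∑ i, ⟪x, (b i : EuclideanSpace ℝ n)⟫ * ⟪x, (b i : EuclideanSpace ℝ n)⟫ := by
    rw [← hdot x x, ← b.sum_inner_mul_inner x x]
    refine Finset.sum_congr rfl fun i _ => ?_
    rw [real_inner_comm x (b i)]
  rw [hx1, hx2, Finset.mul_sum]
  refine Finset.sum_le_sum fun i _ => ?_
  exact mul_le_mul_of_nonneg_right (hle i) (mul_self_nonneg _)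

/-- The integer test vector. -/
def xZ : Fin 12 → ℤ := ![-7,7,-7,-2,-7,2,-7,7,2,7,7,-2]

/-- The real test vector. -/
def xR : Fin 12 → ℝ := fun i => ((xZ i : ℤ) : ℝ)

set_option maxRecDepth 4000 in
lemma lapMatrix_entry_cast (i j : Fin 12) :
    G.lapMatrix ℝ i j = ((G.lapMatrix ℤ i j : ℤ) : ℝ) := by
  by_cases h : i = j <;>
  simp [SimpleGraph.lapMatrix, SimpleGraph.degMatrix, SimpleGraph.adjMatrix,
    Matrix.sub_apply, Matrix.diagonal_apply, Matrix.of_apply, apply_ite, h]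

set_option maxRecDepth 40000 in
lemma quadform_int : dotProduct xZ ((G.lapMatrix ℤ).mulVec xZ) = 3784 := by decide

lemma quadform_val :
    dotProduct xR ((G.lapMatrix ℝ).mulVec xR) = 3784 := by
  have : dotProduct xR ((G.lapMatrix ℝ).mulVec xR)
      = ((dotProduct xZ ((G.lapMatrix ℤ).mulVec xZ) : ℤ) : ℝ) := by
    simp only [dotProduct, Matrix.mulVec, xR, lapMatrix_entry_cast]
    push_cast
    rfl
  rw [this, quadform_int]
  norm_num

lemma normsq_val : dotProduct xR xR = 408 := by
  have hZ : dotProduct xZ xZ = 408 := by decide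
  have : dotProduct xR xR = ((dotProduct xZ xZ : ℤ) : ℝ) := by
    simp only [dotProduct, xR]
    push_cast
    rfl
  rw [this, hZ]
  norm_num

lemma lapMatrix_congr (i1 i2 : DecidableRel G.Adj) :
    @SimpleGraph.lapMatrix _ ℝ _ G i1 _ _ = @SimpleGraph.lapMatrix _ ℝ _ G i2 _ _ := by
  congr!

lemma specRad_ge : (473 : ℝ)/51 ≤ lapSpecRad G := by
  unfold lapSpecRad
  have h1 := rayleigh_le
    (@SimpleGraph.posSemidef_lapMatrix _ ℝ _ G (Classical.decRel G.Adj) _ _ _ _).isHermitian (WithLp.toLp 2 xR)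
  have h2 : dotProduct xR
      ((@SimpleGraph.lapMatrix _ ℝ _ G (Classical.decRel G.Adj) _ _).mulVec xR) = 3784 := by
    rw [lapMatrix_congr (Classical.decRel G.Adj) inferInstance]; exact quadform_val
  rw [WithLp.ofLp_toLp] at h1
  rw [h2, normsq_val] at h1
  linarith

lemma final_step {bs M q : ℝ} (hq : 0 < q) (hqM : q ≤ M) (hb0 : 0 ≤ bs) (hb : bs < q^4) :
    bs ^ ((1:ℝ)/4) < M := by
  have hM : 0 < M := lt_of_lt_of_le hq hqM
  have h4 : bs < M^4 := lt_of_lt_of_le hb (pow_le_pow_left₀ hq.le hqM 4)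
  calc bs ^ ((1:ℝ)/4) < (M^4) ^ ((1:ℝ)/4) :=
        Real.rpow_lt_rpow hb0 h4 (by norm_num : (0:ℝ) < 1/4)
    _ = M := by
        rw [← Real.rpow_natCast M 4, ← Real.rpow_mul hM.le]
        norm_num

lemma Gconn : G.Connected := by
  rw [SimpleGraph.connected_iff]
  refine ⟨?_, ⟨0⟩⟩
  have r1 : G.Reachable 0 1 := (by decide : G.Adj 0 1).reachable
  have r5 : G.Reachable 0 5 := (by decide : G.Adj 0 5).reachable
  have r7 : G.Reachable 0 7 := (by decide : G.Adj 0 7).reachable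
  have r9 : G.Reachable 0 9 := (by decide : G.Adj 0 9).reachable
  have r10 : G.Reachable 0 10 := (by decide : G.Adj 0 10).reachable
  have r2 : G.Reachable 0 2 := r1.trans (by decide : G.Adj 1 2).reachable
  have r3 : G.Reachable 0 3 := r1.trans (by decide : G.Adj 1 3).reachable
  have r4 : G.Reachable 0 4 := r1.trans (by decide : G.Adj 1 4).reachable
  have r6 : G.Reachable 0 6 := r1.trans (by decide : G.Adj 1 6).reachable
  have r8 : G.Reachable 0 8 := r2.trans (by decide : G.Adj 2 8).reachable
  have r11 : G.Reachable 0 11 := r9.trans (by decide : G.Adj 9 11).reachable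
  have h0 : ∀ v : Fin 12, G.Reachable 0 v := by
    intro v
    fin_cases v
    exacts [SimpleGraph.Reachable.refl 0, r1, r2, r3, r4, r5, r6, r7, r8, r9, r10, r11]
  intro u v
  exact (h0 u).symm.trans (h0 v)

/-- Natural-number degrees. -/
def dN : Fin 12 → ℕ := ![5,5,5,2,5,2,5,5,2,5,5,2]

/-- Sum of neighbour degrees. -/
def sN : Fin 12 → ℕ := ![22,22,22,10,22,10,22,22,10,22,22,10]

lemma deg_val : ∀ v : Fin 12, G.degree v = dN v := by decide

lemma degsum_val : ∀ v : Fin 12, (∑ u ∈ G.neighborFinset v, G.degree u) = sN v := by decide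

lemma degR_val (v : Fin 12) : degR G v = (dN v : ℝ) := by
  unfold degR
  rw [degree_congr G v _ (SimpleGraph.neighborSetFintype G v), deg_val v]

lemma avgDegR_val (v : Fin 12) : avgDegR G v = ((sN v : ℝ) / (dN v : ℝ)) := by
  unfold avgDegR
  rw [degree_congr G v _ (SimpleGraph.neighborSetFintype G v), deg_val v,
    neighborFinset_congr G v _ (SimpleGraph.neighborSetFintype G v)]
  congr 1
  refine (Finset.sum_congr (g := fun u => ((G.degree u : ℕ) : ℝ)) rfl fun u _ => ?_).trans ?_
  · exact congrArg (fun k : ℕ => (k : ℝ)) (degree_congr G u _ _)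
  · rw [← Nat.cast_sum, degsum_val v]

end CE17

/-- There exists a finite simple connected graph `G` with at least two vertices whose
Laplacian spectral radius exceeds the conjectured vertex-maximum bound. -/
theorem exists_counterexample_bound17 :
    ∃ (V : Type) (_ : Fintype V) (_ : DecidableEq V) (_ : Nonempty V)
      (G : SimpleGraph V), G.Connected ∧ 2 ≤ Fintype.card V ∧
      ∀ v : V, (fun d m => (5 * d ^ 4 + 11 * m ^ 4) ^ ((1 : ℝ) / 4)) (degR G v) (avgDegR G v) < lapSpecRad G := by
  refine ⟨Fin 12, inferInstance, inferInstance, inferInstance, CE17.G, CE17.Gconn,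
    by norm_num, ?_⟩
  intro v
  simp only [CE17.degR_val, CE17.avgDegR_val]
  have hq : (0:ℝ) < 473/51 := by norm_num
  have hqM := CE17.specRad_ge
  fin_cases v <;>
    exact CE17.final_step hq hqM (by positivity) (by norm_num [CE17.dN, CE17.sN])
end
end

section
/- There exists a finite simple connected graph G with at least two vertices such that μ(G) > max over all vertices v of G of √(2·m_v⁴/d_v² + 2·d_v·m_v). (This disproves conjectured vertex-maximum bound 28 of Brankov, Hansen and Stevanović.) -/
noncomputable section

open Finset

/-- adjacency function : vertex 0 is universal; vertices 1..18 form a 5-regular circulant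
on Z/18 with connection set {±1, ±2, 9}. -/
def cf : Fin 19 → Fin 19 → Bool := fun i j =>
  decide (i ≠ j) && (decide (i.val = 0) || decide (j.val = 0) ||
    (let d := (i.val + 18 - j.val) % 18
     (d == 1) || (d == 2) || (d == 9) || (d == 16) || (d == 17)))

/-- The counterexample graph. -/
def cG : SimpleGraph (Fin 19) where
  Adj i j := cf i j = true
  symm := ⟨fun i j h => (by decide : ∀ i j : Fin 19, cf i j = true → cf j i = true) i j h⟩
  loopless := ⟨fun i h => absurd h ((by decide : ∀ i : Fin 19, ¬ cf i i = true) i)⟩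

instance : DecidableRel cG.Adj := fun i j => inferInstanceAs (Decidable (_ = true))

lemma cG_classical_inst : Classical.decRel cG.Adj = (inferInstance : DecidableRel cG.Adj) :=
  Subsingleton.elim _ _

/-- If `μ` is an eigenvalue of the Laplacian, it is at most `lapSpecRad`. -/
lemma le_lapSpecRad {V : Type} [Fintype V] [DecidableEq V] [Nonempty V]
    (G : SimpleGraph V) (μ : ℝ) (x : V → ℝ) (hx : x ≠ 0)
    (h : (@SimpleGraph.lapMatrix V ℝ _ G (Classical.decRel G.Adj) _ _).mulVec x = μ • x) :
    μ ≤ lapSpecRad G := by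
  letI := Classical.decRel G.Adj
  set L := SimpleGraph.lapMatrix ℝ G with hL
  have hH := (SimpleGraph.posSemidef_lapMatrix ℝ G).isHermitian
  have heig : Module.End.HasEigenvalue (Matrix.toLin' L) μ := by
    apply Module.End.hasEigenvalue_of_hasEigenvector (x := x)
    refine ⟨Module.End.mem_eigenspace_iff.mpr ?_, hx⟩
    rw [Matrix.toLin'_apply, h]
  have hspec : μ ∈ spectrum ℝ L := by
    have := heig.mem_spectrum
    rwa [show Matrix.toLin' L = (Matrix.toLinAlgEquiv (Pi.basisFun ℝ V)) L from rfl,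
        AlgEquiv.spectrum_eq (Matrix.toLinAlgEquiv (Pi.basisFun ℝ V)) L] at this
  rw [Matrix.IsHermitian.spectrum_real_eq_range_eigenvalues hH] at hspec
  obtain ⟨i, hi⟩ := hspec
  calc μ = hH.eigenvalues i := hi.symm
    _ ≤ ⨆ i, hH.eigenvalues i := le_ciSup (Set.Finite.bddAbove (Set.finite_range _)) i

lemma cG_adj0 : ∀ v : Fin 19, v ≠ 0 → cG.Adj 0 v := by decide

lemma cG_deg_facts : ∀ v : Fin 19,
    (v = 0 ∧ cG.degree v = 18 ∧ (∑ u ∈ cG.neighborFinset v, cG.degree u) = 108) ∨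
    (v ≠ 0 ∧ cG.degree v = 6 ∧ (∑ u ∈ cG.neighborFinset v, cG.degree u) = 48) := by decide

lemma cG_degR (v : Fin 19) : degR cG v = (cG.degree v : ℝ) := by
  unfold degR
  rw [cG_classical_inst]

lemma cG_avgDegR (v : Fin 19) :
    avgDegR cG v = ((∑ u ∈ cG.neighborFinset v, cG.degree u : ℕ) : ℝ) / (cG.degree v : ℝ) := by
  unfold avgDegR
  rw [cG_classical_inst]
  push_cast
  rfl

lemma cG_eigen :
    (cG.lapMatrix ℝ).mulVec (fun i => if i = 0 then (18 : ℝ) else -1) =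
      (19 : ℝ) • (fun i => if i = 0 then (18 : ℝ) else -1) := by
  funext v
  rw [SimpleGraph.lapMatrix_mulVec_apply]
  by_cases hv : v = 0
  · subst hv
    have hmem : ∀ u ∈ cG.neighborFinset 0, (if u = 0 then (18 : ℝ) else -1) = -1 := by
      intro u hu
      rw [if_neg]
      intro h
      rw [h] at hu
      exact cG.loopless.irrefl 0 ((SimpleGraph.mem_neighborFinset _ _ _).mp hu)
    rw [Finset.sum_congr rfl hmem, Finset.sum_const]
    have hcard : (cG.neighborFinset 0).card = 18 := by decide
    have hdeg : cG.degree 0 = 18 := by decide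
    rw [hcard, hdeg]
    norm_num
  · have hdeg : cG.degree v = 6 := by
      rcases cG_deg_facts v with ⟨h0, _⟩ | ⟨_, h, _⟩
      · exact absurd h0 hv
      · exact h
    have h0mem : (0 : Fin 19) ∈ cG.neighborFinset v :=
      (SimpleGraph.mem_neighborFinset _ _ _).mpr ((cG_adj0 v hv).symm)
    rw [← Finset.sum_erase_add _ _ h0mem]
    have hmem : ∀ u ∈ (cG.neighborFinset v).erase 0,
        (if u = 0 then (18 : ℝ) else -1) = -1 := by
      intro u hu
      rw [if_neg (Finset.ne_of_mem_erase hu)]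
    rw [Finset.sum_congr rfl hmem, Finset.sum_const]
    have hcard : ((cG.neighborFinset v).erase 0).card = 5 := by
      rw [Finset.card_erase_of_mem h0mem]
      have : (cG.neighborFinset v).card = 6 := hdeg
      rw [this]
    rw [hcard, hdeg]
    simp only [Pi.smul_apply, smul_eq_mul, if_neg hv]
    norm_num

/-- There exists a finite simple connected graph `G` with at least two vertices whose
Laplacian spectral radius exceeds the conjectured vertex-maximum bound. -/
theorem exists_counterexample_bound28 :
    ∃ (V : Type) (_ : Fintype V) (_ : DecidableEq V) (_ : Nonempty V)
      (G : SimpleGraph V), G.Connected ∧ 2 ≤ Fintype.card V ∧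
      ∀ v : V, (fun d m => Real.sqrt (2 * m ^ 4 / d ^ 2 + 2 * d * m)) (degR G v) (avgDegR G v) < lapSpecRad G := by
  refine ⟨Fin 19, inferInstance, inferInstance, inferInstance, cG, ?_, ?_, ?_⟩
  · rw [SimpleGraph.connected_iff]
    refine ⟨fun u v => ?_, inferInstance⟩
    have h0 : ∀ w : Fin 19, cG.Reachable 0 w := by
      intro w
      by_cases hw : w = 0
      · subst hw
        exact SimpleGraph.Reachable.refl 0
      · exact (cG_adj0 w hw).reachable
    exact (h0 u).symm.trans (h0 v)
  · simp
  · intro v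
    have hlow : (19 : ℝ) ≤ lapSpecRad cG := by
      apply le_lapSpecRad cG 19 (fun i => if i = 0 then (18 : ℝ) else -1)
      · intro h
        have := congrFun h 0
        norm_num at this
      · rw [cG_classical_inst]
        exact cG_eigen
    refine lt_of_lt_of_le ?_ hlow
    show Real.sqrt (2 * (avgDegR cG v) ^ 4 / (degR cG v) ^ 2
        + 2 * (degR cG v) * (avgDegR cG v)) < 19
    rw [cG_degR, cG_avgDegR]
    rcases cG_deg_facts v with ⟨_, hd, hs⟩ | ⟨_, hd, hs⟩ <;>
      rw [hd, hs] <;>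
      rw [Real.sqrt_lt' (by norm_num : (0:ℝ) < 19)] <;>
      norm_num
end
end

section
/- There exists a finite simple connected graph G with at least two vertices such that μ(G) > max over all vertices v of G of √(m_v² + 3·m_v³/d_v). (This disproves conjectured vertex-maximum bound 29 of Brankov, Hansen and Stevanović.) -/
noncomputable section

open Finset
open Matrix

/-- The windmill graph: cone over three disjoint copies of `K₅`. -/
def W : SimpleGraph (Fin 16) where
  Adj i j := i ≠ j ∧ (i = 0 ∨ j = 0 ∨ (i.val - 1) / 5 = (j.val - 1) / 5)
  symm := ⟨by
    intro i j ⟨h1, h2⟩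
    exact ⟨h1.symm, by tauto⟩⟩
  loopless := ⟨by intro i ⟨h, _⟩; exact h rfl⟩

instance instWAdjDec : DecidableRel W.Adj := fun i j =>
  inferInstanceAs (Decidable (i ≠ j ∧ (i = 0 ∨ j = 0 ∨ (i.val - 1) / 5 = (j.val - 1) / 5)))

lemma Wdeg : ∀ v : Fin 16, W.degree v = if v = 0 then 15 else 5 := by decide

lemma Wsum : ∀ v : Fin 16, (∑ u ∈ W.neighborFinset v, W.degree u) = if v = 0 then 75 else 35 := by
  decide

lemma Wadj0 : ∀ v : Fin 16, v ≠ 0 → W.Adj v 0 := by decide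

lemma Wconn : W.Connected := by
  rw [SimpleGraph.connected_iff]
  refine ⟨fun u v => ?_, ⟨0⟩⟩
  have h : ∀ w : Fin 16, W.Reachable w 0 := fun w => by
    by_cases hw : w = 0
    · subst hw; exact SimpleGraph.Reachable.refl 0
    · exact (Wadj0 w hw).reachable
  exact (h u).trans (h v).symm



lemma eig_le_isup {n : Type*} [Fintype n] [DecidableEq n]
    {A : Matrix n n ℝ} (hA : A.IsHermitian) {x : n → ℝ} (hx : x ≠ 0) {α : ℝ}
    (h : A *ᵥ x = α • x) : α ≤ ⨆ i, hA.eigenvalues i := by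
  have hdet : (A - α • 1).det = 0 := by
    rw [← Matrix.exists_mulVec_eq_zero_iff]
    exact ⟨x, hx, by rw [Matrix.sub_mulVec, h, Matrix.smul_mulVec, Matrix.one_mulVec,
      sub_self]⟩
  have hU : star (hA.eigenvectorUnitary : Matrix n n ℝ) * A * (hA.eigenvectorUnitary : Matrix n n ℝ)
      = diagonal (RCLike.ofReal ∘ hA.eigenvalues) := by
    rw [← hA.conjStarAlgAut_star_eigenvectorUnitary, Unitary.conjStarAlgAut_star_apply]
  set U : Matrix n n ℝ := (hA.eigenvectorUnitary : Matrix n n ℝ) with hUdef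
  have hunit : star U * U = 1 := Matrix.UnitaryGroup.star_mul_self _
  have key : star U * (A - α • 1) * U = diagonal (fun i => hA.eigenvalues i - α) := by
    have h2 : star U * (A - α • 1) * U = star U * A * U - α • (star U * U) := by
      noncomm_ring
    rw [h2, hunit, hU]
    ext i j
    by_cases hij : i = j <;>
      simp [Matrix.diagonal, hij, Matrix.one_apply, RCLike.ofReal_real_eq_id]
  have hdet2 : (diagonal (fun i => hA.eigenvalues i - α)).det = 0 := by
    rw [← key, Matrix.det_mul, Matrix.det_mul, hdet]
    ring
  rw [Matrix.det_diagonal, Finset.prod_eq_zero_iff] at hdet2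
  obtain ⟨i, _, hi⟩ := hdet2
  have hαi : α = hA.eigenvalues i := by linarith [sub_eq_zero.mp hi]
  rw [hαi]
  exact le_ciSup (Set.finite_range _).bddAbove i

/-- the eigenvector `(15, -1, …, -1)` for the eigenvalue `16`. -/
def xvec : Fin 16 → ℝ := fun u => 16 * (if u = 0 then 1 else 0) - 1

lemma xvec_ne : xvec ≠ 0 := by
  intro h
  have := congrFun h 0
  norm_num [xvec] at this

lemma nbrAny (v : Fin 16) (i : Fintype (W.neighborSet v)) :
    @SimpleGraph.neighborFinset _ W v i
      = @SimpleGraph.neighborFinset _ W v (@SimpleGraph.neighborSetFintype _ W _ instWAdjDec v) := by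
  rw [Subsingleton.elim i (@SimpleGraph.neighborSetFintype _ W _ instWAdjDec v)]

lemma degAny (v : Fin 16) (i : Fintype (W.neighborSet v)) :
    @SimpleGraph.degree _ W v i
      = @SimpleGraph.degree _ W v (@SimpleGraph.neighborSetFintype _ W _ instWAdjDec v) := by
  rw [Subsingleton.elim i (@SimpleGraph.neighborSetFintype _ W _ instWAdjDec v)]

lemma Wmul (inst : DecidableRel W.Adj) :
    (@SimpleGraph.lapMatrix (Fin 16) ℝ _ W inst _ _) *ᵥ xvec = (16 : ℝ) • xvec := by
  have hie : inst = instWAdjDec := Subsingleton.elim _ _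
  subst hie
  funext v
  rw [SimpleGraph.lapMatrix_mulVec_apply]
  have hsum : ∑ u ∈ W.neighborFinset v, xvec u
      = 16 * (if (0 : Fin 16) ∈ W.neighborFinset v then 1 else 0) - (W.degree v : ℝ) := by
    unfold xvec
    rw [Finset.sum_sub_distrib, ← Finset.mul_sum, Finset.sum_ite_eq' (W.neighborFinset v) 0
      (fun _ => (1 : ℝ)), Finset.sum_const, nsmul_eq_mul, mul_one]
    rfl
  rw [hsum]
  have hmem : ((0 : Fin 16) ∈ W.neighborFinset v) ↔ W.Adj v 0 := SimpleGraph.mem_neighborFinset W v 0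
  by_cases hv : v = 0
  · subst hv
    have h0 : ¬ W.Adj 0 0 := W.loopless.irrefl 0
    rw [Wdeg 0]
    simp only [xvec, Pi.smul_apply, smul_eq_mul]
    rw [if_neg (hmem.not.mpr h0)]
    norm_num
  · have h0 : W.Adj v 0 := Wadj0 v hv
    rw [Wdeg v]
    simp only [xvec, Pi.smul_apply, smul_eq_mul]
    rw [if_pos (hmem.mpr h0), if_neg hv]
    simp [if_neg hv]
    norm_num

lemma degR_eq (v : Fin 16) : degR W v = if v = 0 then (15:ℝ) else 5 := by
  unfold degR
  simp only [degAny]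
  rw [Wdeg v]
  simp [apply_ite (Nat.cast : ℕ → ℝ)]

lemma avgDegR_eq (v : Fin 16) : avgDegR W v = if v = 0 then (5:ℝ) else 7 := by
  unfold avgDegR
  simp only [degAny, nbrAny]
  rw [← Nat.cast_sum, Wsum v, Wdeg v]
  by_cases hv : v = 0 <;> simp only [hv, if_true, if_false, hv] <;> norm_num


/-- There exists a finite simple connected graph `G` with at least two vertices whose
Laplacian spectral radius exceeds the conjectured vertex-maximum bound. -/
theorem exists_counterexample_bound29 :
    ∃ (V : Type) (_ : Fintype V) (_ : DecidableEq V) (_ : Nonempty V)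
      (G : SimpleGraph V), G.Connected ∧ 2 ≤ Fintype.card V ∧
      ∀ v : V, (fun d m => Real.sqrt (m ^ 2 + 3 * m ^ 3 / d)) (degR G v) (avgDegR G v) < lapSpecRad G := by
  refine ⟨Fin 16, inferInstance, inferInstance, inferInstance, W, Wconn, by norm_num, fun v => ?_⟩
  have h16 : (16:ℝ) ≤ lapSpecRad W := by
    unfold lapSpecRad
    exact eig_le_isup _ xvec_ne (Wmul _)
  refine lt_of_lt_of_le ?_ h16
  show Real.sqrt ((avgDegR W v) ^ 2 + 3 * (avgDegR W v) ^ 3 / (degR W v)) < 16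
  rw [Real.sqrt_lt' (by norm_num : (0:ℝ) < 16), degR_eq, avgDegR_eq]
  by_cases hv : v = 0 <;> simp [hv] <;> norm_num
end
end

section
/- There exists a finite simple connected graph G with at least two vertices such that μ(G) > max over all pairs of adjacent vertices v_i ~ v_j of G of (2·(m_i² + m_j²))/(d_i + d_j). (This disproves conjectured edge-maximum bound 36 of Brankov, Hansen and Stevanović.) -/
noncomputable section

open Finset

namespace CEx

open Matrix

lemma eig_le_iSup {n : Type*} [Fintype n] [DecidableEq n]
    {A : Matrix n n ℝ} (hA : A.IsHermitian) {x : n → ℝ} (hx : x ≠ 0) {μ : ℝ}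
    (h : A *ᵥ x = μ • x) : μ ≤ ⨆ i, hA.eigenvalues i := by
  obtain ⟨i, hi⟩ : ∃ i, hA.eigenvalues i = μ := by
    set U := (Matrix.IsHermitian.eigenvectorUnitary hA : Matrix n n ℝ) with hUdef
    have hsU : star U * U = 1 := Unitary.coe_star_mul_self _
    have hUs : U * star U = 1 := Unitary.coe_mul_star_self _
    set y := star U *ᵥ x with hy
    have hyne : y ≠ 0 := by
      intro h0
      apply hx
      have : U *ᵥ (star U *ᵥ x) = U *ᵥ 0 := by rw [← hy, h0]
      simpa [mulVec_mulVec, hUs] using this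
    have hdiag : diagonal (RCLike.ofReal ∘ hA.eigenvalues) *ᵥ y = μ • y := by
      have h2 : diagonal (RCLike.ofReal ∘ hA.eigenvalues) * star U = star U * A := by
        rw [← hA.conjStarAlgAut_star_eigenvectorUnitary, Unitary.conjStarAlgAut_star_apply, ← hUdef]
        rw [mul_assoc, hUs, mul_one]
      calc diagonal (RCLike.ofReal ∘ hA.eigenvalues) *ᵥ y
          = (diagonal (RCLike.ofReal ∘ hA.eigenvalues) * star U) *ᵥ x := by
            rw [hy, mulVec_mulVec]
        _ = star U *ᵥ (A *ᵥ x) := by rw [h2, ← mulVec_mulVec]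
        _ = μ • y := by rw [h, mulVec_smul, hy]
    obtain ⟨i, hi⟩ : ∃ i, y i ≠ 0 := by
      by_contra hc
      push_neg at hc
      exact hyne (funext hc)
    refine ⟨i, ?_⟩
    have := congrFun hdiag i
    simp only [mulVec_diagonal, Function.comp_apply, RCLike.ofReal_real_eq_id, id_eq,
      Pi.smul_apply, smul_eq_mul] at this
    exact mul_right_cancel₀ hi this
  rw [← hi]
  exact le_ciSup (Set.Finite.bddAbove (Set.finite_range _)) i

lemma degR_eq {V : Type*} [Fintype V] (G : SimpleGraph V) [inst : DecidableRel G.Adj] (v : V) :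
    degR G v = (G.degree v : ℝ) := by
  unfold degR; congr!

lemma avgDegR_eq {V : Type*} [Fintype V] (G : SimpleGraph V) [inst : DecidableRel G.Adj] (v : V) :
    avgDegR G v = (∑ u ∈ G.neighborFinset v, (G.degree u : ℝ)) / (G.degree v : ℝ) := by
  unfold avgDegR; congr!

def cS : Finset (ZMod 28) := {1, 2, 3, 4, 5, 23, 24, 25, 26, 27}

def gadj : Option (ZMod 28) → Option (ZMod 28) → Bool
  | none, none => false
  | none, some _ => true
  | some _, none => true
  | some a, some b => decide (a - b ∈ cS)

lemma gadj_symm : ∀ u v, gadj u v = true → gadj v u = true := by decide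

lemma gadj_irrefl : ∀ u, ¬ gadj u u = true := by decide

def myG : SimpleGraph (Option (ZMod 28)) where
  Adj u v := gadj u v = true
  symm := ⟨fun u v => gadj_symm u v⟩
  loopless := ⟨fun u => gadj_irrefl u⟩

instance : DecidableRel myG.Adj := fun _u _v => instDecidableEqBool _ _

lemma deg_none : myG.degree none = 28 := by decide

lemma deg_some : ∀ a : ZMod 28, myG.degree (some a) = 11 := by decide

lemma none_mem_nbhd (a : ZMod 28) : (none : Option (ZMod 28)) ∈ myG.neighborFinset (some a) := by
  rw [SimpleGraph.mem_neighborFinset]; exact rfl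

lemma degR_none : degR myG none = 28 := by rw [degR_eq, deg_none]; norm_num

lemma degR_some (a : ZMod 28) : degR myG (some a) = 11 := by
  rw [degR_eq, deg_some]; norm_num

lemma avgDegR_none : avgDegR myG none = 11 := by
  rw [avgDegR_eq]
  have h : ∀ u ∈ myG.neighborFinset none, (myG.degree u : ℝ) = 11 := by
    intro u hu
    rw [SimpleGraph.mem_neighborFinset] at hu
    match u with
    | none => exact absurd hu (myG.loopless.irrefl none)
    | some a => rw [deg_some a]; norm_num
  rw [Finset.sum_congr rfl h, Finset.sum_const, SimpleGraph.card_neighborFinset_eq_degree,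
    deg_none]
  norm_num

lemma avgDegR_some (a : ZMod 28) : avgDegR myG (some a) = 138 / 11 := by
  rw [avgDegR_eq]
  have h : ∀ u ∈ myG.neighborFinset (some a), (myG.degree u : ℝ) =
      11 + (if u = none then 17 else 0) := by
    intro u hu
    match u with
    | none => rw [deg_none]; norm_num
    | some b => rw [deg_some b]; simp
  rw [Finset.sum_congr rfl h, Finset.sum_add_distrib, Finset.sum_const,
    SimpleGraph.card_neighborFinset_eq_degree, deg_some a, Finset.sum_ite_eq',
    if_pos (none_mem_nbhd a)]
  norm_num

lemma lap_lb : (29 : ℝ) ≤ lapSpecRad myG := by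
  classical
  set x : Option (ZMod 28) → ℝ := fun v => if v = none then 28 else -1 with hxdef
  have hx : x ≠ 0 := by
    intro h0
    have := congrFun h0 none
    simp [hxdef] at this
  have hmul : myG.lapMatrix ℝ *ᵥ x = (29 : ℝ) • x := by
    funext v
    rw [SimpleGraph.lapMatrix_mulVec_apply]
    match v with
    | none =>
      have h : ∀ u ∈ myG.neighborFinset none, x u = -1 := by
        intro u hu
        rw [SimpleGraph.mem_neighborFinset] at hu
        match u with
        | none => exact absurd hu (myG.loopless.irrefl none)
        | some b => simp [hxdef]
      rw [Finset.sum_congr rfl h, Finset.sum_const, SimpleGraph.card_neighborFinset_eq_degree,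
        deg_none]
      simp [hxdef]
      norm_num
    | some a =>
      have h : ∀ u ∈ myG.neighborFinset (some a), x u = -1 + (if u = none then 29 else 0) := by
        intro u _
        match u with
        | none => simp [hxdef]; norm_num
        | some b => simp [hxdef]
      rw [Finset.sum_congr rfl h, Finset.sum_add_distrib, Finset.sum_const,
        SimpleGraph.card_neighborFinset_eq_degree, deg_some a, Finset.sum_ite_eq',
        if_pos (none_mem_nbhd a)]
      simp [hxdef]
  unfold lapSpecRad
  refine eig_le_iSup _ hx ?_
  have hL : (letI := Classical.decRel myG.Adj; myG.lapMatrix ℝ) = myG.lapMatrix ℝ := by congr!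
  rw [hL]
  exact hmul

end CEx

/-- There exists a finite simple connected graph `G` with at least two vertices whose
Laplacian spectral radius exceeds the conjectured edge-maximum bound. -/
theorem exists_counterexample_bound36 :
    ∃ (V : Type) (_ : Fintype V) (_ : DecidableEq V) (_ : Nonempty V)
      (G : SimpleGraph V), G.Connected ∧ 2 ≤ Fintype.card V ∧
      ∀ i j : V, G.Adj i j →
        (fun di mi dj mj => 2 * (mi ^ 2 + mj ^ 2) / (di + dj))
          (degR G i) (avgDegR G i) (degR G j) (avgDegR G j) < lapSpecRad G := by
  classical
  refine ⟨Option (ZMod 28), inferInstance, inferInstance, inferInstance, CEx.myG, ?_, ?_, ?_⟩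
  · rw [SimpleGraph.connected_iff]
    constructor
    · have r : ∀ w : Option (ZMod 28), CEx.myG.Reachable none w := by
        intro w
        match w with
        | none => exact SimpleGraph.Reachable.refl _
        | some a => exact SimpleGraph.Adj.reachable rfl
      exact fun u v => (r u).symm.trans (r v)
    · exact ⟨none⟩
  · simp [Fintype.card_option]
  · intro i j hadj
    have hlb := CEx.lap_lb
    match i, j with
    | none, none => exact absurd hadj (CEx.myG.loopless.irrefl none)
    | none, some b =>
      refine lt_of_lt_of_le ?_ hlb
      rw [CEx.degR_none, CEx.degR_some, CEx.avgDegR_none, CEx.avgDegR_some]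
      norm_num
    | some a, none =>
      refine lt_of_lt_of_le ?_ hlb
      rw [CEx.degR_none, CEx.degR_some, CEx.avgDegR_none, CEx.avgDegR_some]
      norm_num
    | some a, some b =>
      refine lt_of_lt_of_le ?_ hlb
      rw [CEx.degR_some, CEx.degR_some, CEx.avgDegR_some, CEx.avgDegR_some]
      norm_num
end
end

section
/- There exists a finite simple connected graph G with at least two vertices such that μ(G) > max over all pairs of adjacent vertices v_i ~ v_j of G of 2 + √(2·(m_i² + m_j²) + (d_i − d_j)² − 4·(d_i + d_j) + 4). (This disproves conjectured edge-maximum bound 49 of Brankov, Hansen and Stevanović.) -/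
noncomputable section

open Finset

namespace CE49

/-- Adjacency of the counterexample graph: vertex `0` is an apex joined to all other
vertices, and vertices `1,…,12` form a `3`-regular circulant (differences `1, 6, 11` mod 12). -/
def adjP (i j : Fin 13) : Prop :=
  i ≠ j ∧ (i = 0 ∨ j = 0 ∨ ((i.val + 12 - j.val) % 12 = 1 ∨
    (i.val + 12 - j.val) % 12 = 6 ∨ (i.val + 12 - j.val) % 12 = 11))

instance : DecidablePred fun p : Fin 13 × Fin 13 => adjP p.1 p.2 := fun _ =>
  inferInstanceAs (Decidable (_ ∧ _))

instance adjPDec : ∀ i j : Fin 13, Decidable (adjP i j) := fun _ _ =>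
  inferInstanceAs (Decidable (_ ∧ _))

/-- The counterexample graph. -/
def cg : SimpleGraph (Fin 13) where
  Adj := adjP
  symm := ⟨by intro i j h; revert i j h; decide⟩
  loopless := ⟨by intro v; revert v; decide⟩

instance : DecidableRel cg.Adj := fun i j => inferInstanceAs (Decidable (adjP i j))

lemma deg_eq : ∀ v : Fin 13, cg.degree v = if v = 0 then 12 else 4 := by decide

lemma sumdeg_eq : ∀ v : Fin 13,
    ∑ u ∈ cg.neighborFinset v, cg.degree u = if v = 0 then 48 else 24 := by decide

/-- The eigenvector for eigenvalue 13, integer version. -/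
def xZ (v : Fin 13) : ℤ := if v = 0 then 12 else -1

lemma sumx_eq : ∀ v : Fin 13,
    ∑ u ∈ cg.neighborFinset v, xZ u = if v = 0 then -12 else 9 := by decide

/-- The real eigenvector. -/
def xR (v : Fin 13) : ℝ := ((xZ v : ℤ) : ℝ)

lemma eigen_mulVec : Matrix.mulVec (cg.lapMatrix ℝ) xR = (13 : ℝ) • xR := by
  funext v
  rw [SimpleGraph.lapMatrix_mulVec_apply]
  have h1 : ∑ u ∈ cg.neighborFinset v, xR u
      = ((∑ u ∈ cg.neighborFinset v, xZ u : ℤ) : ℝ) := by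
    simp [xR]
  rw [h1, sumx_eq v, deg_eq v]
  by_cases hv : v = 0 <;> simp [hv, xR, xZ]
  · norm_num
  · norm_num

lemma xR_ne_zero : xR ≠ 0 := by
  intro h
  have := congrFun h 0
  simp [xR, xZ] at this

lemma mem_spec : (13 : ℝ) ∈ spectrum ℝ (cg.lapMatrix ℝ) := by
  rw [← AlgEquiv.spectrum_eq (Matrix.toLinAlgEquiv' : Matrix (Fin 13) (Fin 13) ℝ ≃ₐ[ℝ] _)]
  have hev : Module.End.HasEigenvector (Matrix.toLinAlgEquiv' (cg.lapMatrix ℝ)) 13 xR := by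
    constructor
    · rw [Module.End.mem_eigenspace_iff]
      show Matrix.toLin' (cg.lapMatrix ℝ) xR = _
      rw [Matrix.toLin'_apply, eigen_mulVec]
    · exact xR_ne_zero
  exact (Module.End.hasEigenvalue_of_hasEigenvector hev).mem_spectrum

lemma lap_classical_eq :
    (letI := Classical.decRel cg.Adj; cg.lapMatrix ℝ) = cg.lapMatrix ℝ := by
  congr!

lemma spec_rad_ge : (13 : ℝ) ≤ lapSpecRad cg := by
  unfold lapSpecRad
  have h13 : (13 : ℝ) ∈ spectrum ℝ
      (letI := Classical.decRel cg.Adj; cg.lapMatrix ℝ) := by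
    rw [lap_classical_eq]; exact mem_spec
  letI := Classical.decRel cg.Adj
  have hH := (SimpleGraph.posSemidef_lapMatrix ℝ cg).isHermitian
  rw [Matrix.IsHermitian.spectrum_real_eq_range_eigenvalues hH] at h13
  obtain ⟨i, hi⟩ := h13
  calc (13 : ℝ) = hH.eigenvalues i := hi.symm
    _ ≤ ⨆ j, hH.eigenvalues j :=
        le_ciSup (Set.Finite.bddAbove (Set.finite_range _)) i

lemma degR_eq (v : Fin 13) : degR cg v = (cg.degree v : ℝ) := by
  unfold degR
  congr!

lemma avgDegR_eq (v : Fin 13) :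
    avgDegR cg v = (∑ u ∈ cg.neighborFinset v, (cg.degree u : ℝ)) / (cg.degree v : ℝ) := by
  unfold avgDegR
  congr!

lemma degR_val (v : Fin 13) : degR cg v = if v = 0 then 12 else 4 := by
  rw [degR_eq, deg_eq]
  by_cases hv : v = 0 <;> simp [hv]

lemma avgDegR_val (v : Fin 13) : avgDegR cg v = if v = 0 then 4 else 6 := by
  rw [avgDegR_eq]
  have h1 : ∑ u ∈ cg.neighborFinset v, (cg.degree u : ℝ)
      = ((∑ u ∈ cg.neighborFinset v, cg.degree u : ℕ) : ℝ) := by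
    push_cast; rfl
  rw [h1, sumdeg_eq, deg_eq]
  by_cases hv : v = 0 <;> simp [hv] <;> norm_num

lemma conn : cg.Connected := by
  rw [SimpleGraph.connected_iff]
  refine ⟨fun u v => ?_, ⟨0⟩⟩
  have key : ∀ w : Fin 13, w ≠ 0 → cg.Adj w 0 := by decide
  by_cases huv : u = v
  · exact huv ▸ SimpleGraph.Reachable.refl u
  by_cases hu : u = 0
  · by_cases hv : v = 0
    · exact absurd (hu.trans hv.symm) huv
    · exact hu ▸ ((key v hv).symm.reachable)
  · by_cases hv : v = 0
    · exact hv ▸ (key u hu).reachable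
    · exact ((key u hu).reachable).trans ((key v hv).symm.reachable)

end CE49

/-- There exists a finite simple connected graph `G` with at least two vertices whose
Laplacian spectral radius exceeds the conjectured edge-maximum bound. -/
theorem exists_counterexample_bound49 :
    ∃ (V : Type) (_ : Fintype V) (_ : DecidableEq V) (_ : Nonempty V)
      (G : SimpleGraph V), G.Connected ∧ 2 ≤ Fintype.card V ∧
      ∀ i j : V, G.Adj i j →
        (fun di mi dj mj => 2 + Real.sqrt (2 * (mi ^ 2 + mj ^ 2) + (di - dj) ^ 2 - 4 * (di + dj) + 4))
          (degR G i) (avgDegR G i) (degR G j) (avgDegR G j) < lapSpecRad G := by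
  refine ⟨Fin 13, inferInstance, inferInstance, inferInstance, CE49.cg,
    CE49.conn, by simp, fun i j hij => ?_⟩
  simp only
  have hne : i ≠ j := CE49.cg.ne_of_adj hij
  have h116 : Real.sqrt 116 < 11 := by
    rw [show (11 : ℝ) = Real.sqrt 121 by
      rw [show (121 : ℝ) = 11 ^ 2 by norm_num, Real.sqrt_sq (by norm_num)]]
    exact Real.sqrt_lt_sqrt (by norm_num) (by norm_num)
  have h108 : Real.sqrt 108 < 11 := by
    rw [show (11 : ℝ) = Real.sqrt 121 by
      rw [show (121 : ℝ) = 11 ^ 2 by norm_num, Real.sqrt_sq (by norm_num)]]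
    exact Real.sqrt_lt_sqrt (by norm_num) (by norm_num)
  have key : 2 + Real.sqrt (2 * (avgDegR CE49.cg i ^ 2 + avgDegR CE49.cg j ^ 2) +
      (degR CE49.cg i - degR CE49.cg j) ^ 2 -
      4 * (degR CE49.cg i + degR CE49.cg j) + 4) < 13 := by
    rw [CE49.degR_val, CE49.degR_val, CE49.avgDegR_val, CE49.avgDegR_val]
    by_cases hi : i = 0 <;> by_cases hj : j = 0
    · exact absurd (hi.trans hj.symm) hne
    · simp only [hi, if_pos rfl, if_neg hj]
      norm_num
      linarith [h108]
    · simp only [hj, if_pos rfl, if_neg hi]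
      norm_num
      linarith [h108]
    · simp only [if_neg hi, if_neg hj]
      norm_num
      linarith [h116]
  calc _ < (13 : ℝ) := key
    _ ≤ lapSpecRad CE49.cg := CE49.spec_rad_ge
end
end

section
/- There exists a finite simple connected graph G with at least two vertices such that μ(G) > max over all pairs of adjacent vertices v_i ~ v_j of G of d_i + d_j + m_i + m_j − 4·d_i·d_j/(m_i + m_j). (This disproves conjectured edge-maximum bound 63 of Brankov, Hansen and Stevanović.) -/
noncomputable section

open Finset

open Matrix in
lemma exists_eigenvalue_gt {n : Type*} [Fintype n] [DecidableEq n] {A : Matrix n n ℝ}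
    (hA : A.IsHermitian) (x : n → ℝ) (c : ℝ)
    (h : c * (x ⬝ᵥ x) < x ⬝ᵥ (A *ᵥ x)) : ∃ i, c < hA.eigenvalues i := by
  by_contra hcon
  push_neg at hcon
  set U : Matrix n n ℝ := (hA.eigenvectorUnitary : Matrix n n ℝ) with hU
  set y : n → ℝ := Uᵀ *ᵥ x with hy
  have hstar : star U = Uᵀ := by
    rw [Matrix.star_eq_conjTranspose, Matrix.conjTranspose_eq_transpose_of_trivial]
  have hUU : U * Uᵀ = 1 := by
    rw [← hstar]; exact (Matrix.mem_unitaryGroup_iff).mp hA.eigenvectorUnitary.2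
  have key : x ⬝ᵥ (A *ᵥ x) = ∑ i, hA.eigenvalues i * (y i)^2 := by
    conv_lhs => rw [hA.spectral_theorem, Unitary.conjStarAlgAut_apply, hstar]
    rw [← mulVec_mulVec, ← mulVec_mulVec, Matrix.dotProduct_mulVec (A := U),
      ← Matrix.mulVec_transpose]
    simp only [← hy, Matrix.mulVec_diagonal, dotProduct]
    congr 1 with i
    simp [Function.comp]
    ring
  have hxx : x ⬝ᵥ x = ∑ i, (y i)^2 := by
    have h2 : y ⬝ᵥ y = x ⬝ᵥ ((U * Uᵀ) *ᵥ x) := by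
      rw [hy, ← mulVec_mulVec, Matrix.dotProduct_mulVec (A := U), ← Matrix.mulVec_transpose]
    rw [hUU] at h2
    simp only [Matrix.one_mulVec] at h2
    rw [← h2]
    simp [dotProduct, sq]
  rw [key, hxx, Finset.mul_sum] at h
  exact absurd (Finset.sum_le_sum (fun i _ =>
    mul_le_mul_of_nonneg_right (hcon i) (sq_nonneg (y i)))) (not_le.mpr h)

open Matrix in
lemma lapSpecRad_gt {V : Type} [Fintype V] [DecidableEq V] [Nonempty V]
    (G : SimpleGraph V) (inst : DecidableRel G.Adj) (c : ℝ) (x : V → ℝ)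
    (h : c * (x ⬝ᵥ x) < x ⬝ᵥ ((@SimpleGraph.lapMatrix V ℝ _ G inst _ _) *ᵥ x)) :
    c < lapSpecRad G := by
  unfold lapSpecRad
  letI := Classical.decRel G.Adj
  have heq : G.lapMatrix ℝ = @SimpleGraph.lapMatrix V ℝ _ G inst _ _ := by congr!
  rw [← heq] at h
  obtain ⟨i, hi⟩ := exists_eigenvalue_gt (SimpleGraph.posSemidef_lapMatrix ℝ G).isHermitian x c h
  exact hi.trans_le (le_ciSup (Set.Finite.bddAbove (Set.finite_range _)) i)

lemma degR_eq_s15 {V : Type*} [Fintype V] (G : SimpleGraph V) [DecidableRel G.Adj] (v : V) :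
    degR G v = (G.degree v : ℝ) := by
  unfold degR
  congr!

lemma avgDegR_eq_s15 {V : Type*} [Fintype V] (G : SimpleGraph V) [DecidableRel G.Adj] (v : V) :
    avgDegR G v = ((∑ u ∈ G.neighborFinset v, G.degree u : ℕ) : ℝ) / (G.degree v : ℝ) := by
  unfold avgDegR
  rw [Nat.cast_sum]
  congr!

def edg : Fin 10 → Fin 10 → Bool := fun i j =>
  [(0,1),(0,2),(0,3),(1,4),(2,5),(3,6),(4,7),(5,8),(6,9)].contains ((i:ℕ),(j:ℕ)) ||
  [(0,1),(0,2),(0,3),(1,4),(2,5),(3,6),(4,7),(5,8),(6,9)].contains ((j:ℕ),(i:ℕ))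

def spider : SimpleGraph (Fin 10) where
  Adj i j := edg i j
  symm := ⟨fun i j h => by revert h; revert i j; decide⟩
  loopless := ⟨fun i h => by revert h; revert i; decide⟩

instance spiderDec : DecidableRel spider.Adj := fun i j => inferInstanceAs (Decidable (edg i j = true))

lemma spider_conn : spider.Connected := by
  rw [SimpleGraph.connected_iff]
  refine ⟨fun u v => ?_, ⟨0⟩⟩
  have a : ∀ i j : Fin 10, edg i j = true → spider.Reachable i j :=
    fun i j h => (SimpleGraph.Adj.reachable (by exact h))
  have hub : ∀ v : Fin 10, spider.Reachable 0 v := by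
    intro v
    fin_cases v
    · rfl
    · exact a 0 1 rfl
    · exact a 0 2 rfl
    · exact a 0 3 rfl
    · exact (a 0 1 rfl).trans (a 1 4 rfl)
    · exact (a 0 2 rfl).trans (a 2 5 rfl)
    · exact (a 0 3 rfl).trans (a 3 6 rfl)
    · exact ((a 0 1 rfl).trans (a 1 4 rfl)).trans (a 4 7 rfl)
    · exact ((a 0 2 rfl).trans (a 2 5 rfl)).trans (a 5 8 rfl)
    · exact ((a 0 3 rfl).trans (a 3 6 rfl)).trans (a 6 9 rfl)
  exact (hub u).symm.trans (hub v)

def xz : Fin 10 → ℤ := ![31,-15,-15,-15,7,7,7,-2,-2,-2]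
def yz : Fin 10 → ℤ := ![138,-68,-68,-68,31,31,31,-9,-9,-9]

open Matrix in
lemma spider_rad : (43 : ℝ)/10 < lapSpecRad spider := by
  have hz : ∀ v : Fin 10,
      (spider.degree v : ℤ) * xz v - ∑ u ∈ spider.neighborFinset v, xz u = yz v := by decide
  apply lapSpecRad_gt spider spiderDec _ (fun v => (xz v : ℝ))
  have hLx : ∀ v, ((spider.lapMatrix ℝ) *ᵥ (fun v => (xz v : ℝ))) v = ((yz v : ℤ) : ℝ) := by
    intro v
    rw [SimpleGraph.lapMatrix_mulVec_apply, ← hz v]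
    push_cast
    ring
  have h1 : (fun v => (xz v:ℝ)) ⬝ᵥ (spider.lapMatrix ℝ *ᵥ (fun v => (xz v:ℝ)))
      = ((∑ v, xz v * yz v : ℤ) : ℝ) := by
    simp only [dotProduct]
    trans (∑ v, ((xz v : ℤ) : ℝ) * ((yz v : ℤ) : ℝ))
    · exact Finset.sum_congr rfl fun v _ => by rw [hLx v]
    · push_cast; rfl
  have h2 : (fun v => (xz v:ℝ)) ⬝ᵥ (fun v => (xz v:ℝ)) = ((∑ v, xz v * xz v : ℤ) : ℝ) := by
    simp only [dotProduct]
    push_cast; rfl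
  rw [h1, h2, show (∑ v, xz v * yz v : ℤ) = 8043 from by decide,
    show (∑ v, xz v * xz v : ℤ) = 1795 from by decide]
  norm_num

lemma bound_le {a b si sj : ℝ} (ha : 1 ≤ a) (hb : 1 ≤ b) (hsi : 1 ≤ si) (hsj : 1 ≤ sj)
    (key : 10*(a+b)*(si*b+sj*a)*(a*b) + 10*(si*b+sj*a)^2
      ≤ 43*(si*b+sj*a)*(a*b) + 40*(a*b)*(a*b)^2) :
    a + b + si/a + sj/b - 4*a*b/(si/a + sj/b) ≤ 43/10 := by
  have ha0 : (0:ℝ) < a := lt_of_lt_of_le one_pos ha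
  have hb0 : (0:ℝ) < b := lt_of_lt_of_le one_pos hb
  have hsi0 : (0:ℝ) < si := lt_of_lt_of_le one_pos hsi
  have hsj0 : (0:ℝ) < sj := lt_of_lt_of_le one_pos hsj
  have hs : (0:ℝ) < si/a + sj/b := by positivity
  have hQ2 : (0:ℝ) < (a*b)^2 := by positivity
  have hseq : (si/a + sj/b) * (a*b) = si*b + sj*a := by
    field_simp
  rw [← hseq] at key
  have h2 : (a*b)^2 * (10*(a+b)*(si/a+sj/b) + 10*(si/a+sj/b)^2)
      ≤ (a*b)^2 * (43*(si/a+sj/b) + 40*(a*b)) := by nlinarith [key]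
  have hkey' : 10*(a+b)*(si/a+sj/b) + 10*(si/a+sj/b)^2
      ≤ 43*(si/a+sj/b) + 40*(a*b) := le_of_mul_le_mul_left h2 hQ2
  apply le_of_mul_le_mul_right _ (by positivity : (0:ℝ) < 10*(si/a + sj/b))
  have expand : (a + b + si/a + sj/b - 4*a*b/(si/a + sj/b)) * (10*(si/a + sj/b))
      = 10*(a+b)*(si/a+sj/b) + 10*(si/a+sj/b)^2 - 40*(a*b) := by
    field_simp
    ring
  rw [expand]
  nlinarith [hkey']

def Dn (v : Fin 10) : ℕ := spider.degree v
def Sn (v : Fin 10) : ℕ := ∑ u ∈ spider.neighborFinset v, spider.degree u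

lemma edge_bound (i j : Fin 10) (h : spider.Adj i j) :
    degR spider i + degR spider j + avgDegR spider i + avgDegR spider j
      - 4 * degR spider i * degR spider j / (avgDegR spider i + avgDegR spider j)
      ≤ 43/10 := by
  have hD1 : ∀ v : Fin 10, 1 ≤ Dn v := by decide
  have hS1 : ∀ v : Fin 10, 1 ≤ Sn v := by decide
  have key : ∀ i j : Fin 10, spider.Adj i j →
      10*(Dn i + Dn j)*(Sn i * Dn j + Sn j * Dn i)*(Dn i * Dn j)
        + 10*(Sn i * Dn j + Sn j * Dn i)^2
      ≤ 43*(Sn i * Dn j + Sn j * Dn i)*(Dn i * Dn j)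
        + 40*(Dn i * Dn j)*((Dn i * Dn j))^2 := by decide
  have hdeg : ∀ v : Fin 10, degR spider v = ((Dn v : ℕ) : ℝ) := fun v => degR_eq_s15 spider v
  have havg : ∀ v : Fin 10, avgDegR spider v = ((Sn v : ℕ) : ℝ) / ((Dn v : ℕ) : ℝ) :=
    fun v => avgDegR_eq_s15 spider v
  rw [hdeg i, hdeg j, havg i, havg j]
  apply bound_le
  · exact_mod_cast hD1 i
  · exact_mod_cast hD1 j
  · exact_mod_cast hS1 i
  · exact_mod_cast hS1 j
  · exact_mod_cast key i j h


/-- There exists a finite simple connected graph `G` with at least two vertices whose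
Laplacian spectral radius exceeds the conjectured edge-maximum bound. -/
theorem exists_counterexample_bound63 :
    ∃ (V : Type) (_ : Fintype V) (_ : DecidableEq V) (_ : Nonempty V)
      (G : SimpleGraph V), G.Connected ∧ 2 ≤ Fintype.card V ∧
      ∀ i j : V, G.Adj i j →
        (fun di mi dj mj => di + dj + mi + mj - 4 * di * dj / (mi + mj))
          (degR G i) (avgDegR G i) (degR G j) (avgDegR G j) < lapSpecRad G := by
  refine ⟨Fin 10, inferInstance, inferInstance, ⟨0⟩, spider, spider_conn, by norm_num, ?_⟩
  intro i j h
  have h1 := edge_bound i j h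
  have h2 := spider_rad
  show degR spider i + degR spider j + avgDegR spider i + avgDegR spider j
      - 4 * degR spider i * degR spider j / (avgDegR spider i + avgDegR spider j)
      < lapSpecRad spider
  linarith
end
end
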